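/- Let x, z be complex numbers of absolute value 1 with x ≠ −1. If the product (2 + x + x̄)(2 + x + z̄)(1 + 2x̄ + xz) is real, then (x² − 1)(xz − 1)² = 0; in particular, if moreover x ≠ 1 then xz = 1. -/

import Mathlib

open Complex ComplexConjugate

/-- If `x, z` are unit complex numbers, `x ≠ −1`, and
`(2+x+x̄)(2+x+z̄)(1+2x̄+xz)` is real, then `(x²−1)(xz−1)² = 0`; in particular,
if moreover `x ≠ 1`, then `xz = 1`. -/
theorem case_x_eq_y_analysis (x z : ℂ)
    (hx : ‖x‖ = 1) (hz : ‖z‖ = 1) (hxne : x ≠ -1)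
    (hreal : ((2 + x + conj x) * (2 + x + conj z) * (1 + 2 * conj x + x * z)).im = 0) :
    (x ^ 2 - 1) * (x * z - 1) ^ 2 = 0 ∧ (x ≠ 1 → x * z = 1) := by
  have hx1 : x * conj x = 1 := by
    rw [Complex.mul_conj, Complex.normSq_eq_norm_sq, hx]; norm_num
  have hz1 : z * conj z = 1 := by
    rw [Complex.mul_conj, Complex.normSq_eq_norm_sq, hz]; norm_num
  have heq : conj ((2 + x + conj x) * (2 + x + conj z) * (1 + 2 * conj x + x * z))
      = (2 + x + conj x) * (2 + x + conj z) * (1 + 2 * conj x + x * z) :=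
    Complex.conj_eq_iff_im.mpr hreal
  simp only [map_mul, map_add, map_one, map_ofNat, Complex.conj_conj] at heq
  set cx := conj x with hcxdef
  set cz := conj z with hczdef
  have hxne' : x + 1 ≠ 0 := fun h => hxne (by linear_combination h)
  have key : (x ^ 2 - 1) * (x * z - 1) ^ 2 = 0 := by
    have h2 : (x + 1) ^ 2 * ((x ^ 2 - 1) * (x * z - 1) ^ 2) = 0 := by
      linear_combination (-(x ^ 3 * z)) * heq +
        (z * cz - 3 * x * z + 2 * x * z * cz + x * z * cx * cz + x * z ^ 2 * cz
          - 6 * x ^ 2 * z - 3 * x ^ 2 * z * cx + 2 * x ^ 2 * z * cx * cz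
          + x ^ 2 * z * cx ^ 2 * cz + x ^ 2 * z ^ 2 + 2 * x ^ 2 * z ^ 2 * cz
          + x ^ 2 * z ^ 2 * cx * cz + x ^ 3 * z * cx * cz - x ^ 4 * z ^ 2) * hx1 +
        (1 + 2 * x + x * z + 2 * x ^ 2 * z - 2 * x ^ 3 - x ^ 4 - 2 * x ^ 4 * z
          - x ^ 5 * z) * hz1
    rcases mul_eq_zero.mp h2 with h | h
    · exact absurd (pow_eq_zero_iff (by norm_num) |>.mp h) hxne'
    · exact h
  refine ⟨key, fun hx1' => ?_⟩
  have hx2 : x ^ 2 - 1 ≠ 0 := by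
    intro h
    have : (x - 1) * (x + 1) = 0 := by linear_combination h
    rcases mul_eq_zero.mp this with h' | h'
    · exact hx1' (by linear_combination h')
    · exact hxne' h'
  have h3 := (mul_eq_zero.mp key).resolve_left hx2
  have h4 := pow_eq_zero_iff (two_ne_zero) |>.mp h3
  linear_combination h4
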